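/- A finite sequence π of distinct keys from a linear order is equal to Preorder(T) for some binary search tree T if and only if π avoids the pattern (2,3,1), i.e., there are no indices i < j < k such that π_k < π_i < π_j. -/

import Mathlib

/-- Binary trees with keys at internal nodes. -/
inductive BT (α : Type) where
  | leaf : BT α
  | node : BT α → α → BT α → BT α
deriving DecidableEq

namespace BT

variable {α : Type} [LinearOrder α]

/-- The list of keys of a tree, in symmetric (inorder) order. -/
def keys : BT α → List α
  | leaf => []
  | node l v r => keys l ++ v :: keys r

/-- The number of nodes of a tree. -/
def size : BT α → ℕ
  | leaf => 0
  | node l _ r => size l + size r + 1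

/-- The symmetric-order (binary search tree) property. -/
def IsBST : BT α → Prop
  | leaf => True
  | node l v r => (∀ x ∈ l.keys, x < v) ∧ (∀ x ∈ r.keys, v < x) ∧ l.IsBST ∧ r.IsBST

/-- Preorder of a binary tree: root, then left subtree, then right subtree. -/
def preorder : BT α → List α
  | leaf => []
  | node l v r => v :: (preorder l ++ preorder r)

/-- Postorder of a binary tree: left subtree, right subtree, then root. -/
def postorder : BT α → List α
  | leaf => []
  | node l v r => postorder l ++ postorder r ++ [v]

/-- Reversed preorder: root, then right subtree, then left subtree
(the preorder of the mirror image). -/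
def revPreorder : BT α → List α
  | leaf => []
  | node l v r => v :: (revPreorder r ++ revPreorder l)

/-- Standard leaf insertion into a binary search tree. -/
def insertKey : BT α → α → BT α
  | leaf, x => node leaf x leaf
  | node l v r, x =>
    if x < v then node (insertKey l x) v r
    else if v < x then node l v (insertKey r x)
    else node l v r

/-- The depth (number of edges from the root) of the node with key `x`,
located by binary search. -/
def depthOf : BT α → α → ℕ
  | leaf, _ => 0
  | node l v r, x =>
    if x < v then depthOf l x + 1
    else if v < x then depthOf r x + 1
    else 0

/-- The search path to the key `x`: `false` records a step to a left child,
`true` a step to a right child. -/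
def pathTo : BT α → α → List Bool
  | leaf, _ => []
  | node l v r, x =>
    if x < v then false :: pathTo l x
    else if v < x then true :: pathTo r x
    else []

/-- The left-depth of the node with key `x`: the number of left-child edges
on the path from the root to it. -/
def leftDepthKey : BT α → α → ℕ
  | leaf, _ => 0
  | node l v r, x =>
    if x < v then leftDepthKey l x + 1
    else if v < x then leftDepthKey r x
    else 0

/-- The subtree rooted at the node with key `x` (empty if `x` is absent). -/
def subtreeAt : BT α → α → BT α
  | leaf, _ => leaf
  | node l v r, x =>
    if x < v then subtreeAt l x
    else if v < x then subtreeAt r x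
    else node l v r

/-- The key at the root, if any. -/
def rootKey : BT α → Option α
  | leaf => none
  | node _ v _ => some v

/-- The key of the parent of the node with key `x`, if any. -/
def parentKey : BT α → α → Option α
  | leaf, _ => none
  | node l v r, x =>
    if x < v then (if l.rootKey = some x then some v else l.parentKey x)
    else if v < x then (if r.rootKey = some x then some v else r.parentKey x)
    else none

/-- A step of the context (zipper) describing the search path from the root
to the current subtree: `inL v r` means the current subtree is the left child
of a node with key `v` and right subtree `r`; `inR l v` means it is the right
child of a node with key `v` and left subtree `l`. -/
inductive Ctx (α : Type) where
  | inL : α → BT α → Ctx α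
  | inR : BT α → α → Ctx α

/-- Descend along the search path for `x`, recording the context.
The head of the returned list corresponds to the immediate parent. -/
def descend : BT α → α → List (Ctx α) → List (Ctx α) × BT α
  | leaf, _, acc => (acc, leaf)
  | node l v r, x, acc =>
    if x < v then descend l x (Ctx.inL v r :: acc)
    else if v < x then descend r x (Ctx.inR l v :: acc)
    else (acc, node l v r)

/-- Reattach a subtree into its context, with no rotations. -/
def rebuild : BT α → List (Ctx α) → BT α
  | t, [] => t
  | t, Ctx.inL v r :: cs => rebuild (node t v r) cs
  | t, Ctx.inR l v :: cs => rebuild (node l v t) cs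

/-- Bottom-up splay steps: repeatedly apply zig / zig-zig / zig-zag steps to
the current subtree (rooted at the node being splayed) until the context is
exhausted. -/
def splayLoop : BT α → List (Ctx α) → BT α
  | t, [] => t
  | node a x b, [Ctx.inL v r] => node a x (node b v r)          -- zig
  | node a x b, [Ctx.inR l v] => node (node l v a) x b          -- zig
  | node a x b, Ctx.inL p pr :: Ctx.inL g gr :: cs =>           -- zig-zig
      splayLoop (node a x (node b p (node pr g gr))) cs
  | node a x b, Ctx.inL p pr :: Ctx.inR gl g :: cs =>           -- zig-zag
      splayLoop (node (node gl g a) x (node b p pr)) cs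
  | node a x b, Ctx.inR pl p :: Ctx.inR gl g :: cs =>           -- zig-zig
      splayLoop (node (node (node gl g pl) p a) x b) cs
  | node a x b, Ctx.inR pl p :: Ctx.inL g gr :: cs =>           -- zig-zag
      splayLoop (node (node pl p a) x (node b g gr)) cs
  | leaf, cs => rebuild leaf cs   -- unreachable when the splayed key is present

/-- Splaying the key `x`: if `x` occurs in the tree, bring its node to the
root by bottom-up splay steps; otherwise leave the tree unchanged. -/
def splay (x : α) (t : BT α) : BT α :=
  match descend t x [] with
  | (_, leaf) => t
  | (cs, found) => splayLoop found cs

/-- `α`-weight-balance in the sense of Nievergelt–Reingold: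
at each node, `min(|L|,|R|) + 1 ≥ α * (|x| + 1)`. -/
def WeightBalanced (a : ℝ) : BT α → Prop
  | leaf => True
  | node l _ r =>
      (min l.size r.size + 1 : ℝ) ≥ a * ((l.size + r.size + 1 : ℕ) + 1 : ℝ) ∧
      WeightBalanced a l ∧ WeightBalanced a r

/-- The rank of `x` in `t`: the number of keys of `t` that are `≤ x`. -/
def rank (t : BT α) (x : α) : ℕ := (t.keys.filter (fun y => y ≤ x)).length

end BT

section Defs

variable {α : Type} [LinearOrder α]

/-- The insertion tree of a sequence: leaf-insert the keys in order. -/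
def bstOf (π : List α) : BT α := π.foldl BT.insertKey BT.leaf

/-- `q` is a sub-root: a node of `t` not yet touched whose parent is touched,
where `touched` is the list of touched keys. -/
def IsSubRoot (t : BT α) (touched : List α) (q : α) : Prop :=
  q ∈ t.keys ∧ q ∉ touched ∧ ∃ p, t.parentKey q = some p ∧ p ∈ touched

/-- π avoids the pattern (2,3,1). -/
def Avoids231 (π : List α) : Prop :=
  ¬ ∃ i j k : Fin π.length, i < j ∧ j < k ∧ π.get k < π.get i ∧ π.get i < π.get j

/-- π avoids the pattern (3,1,2). -/
def Avoids312 (π : List α) : Prop :=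
  ¬ ∃ i j k : Fin π.length, i < j ∧ j < k ∧ π.get j < π.get k ∧ π.get k < π.get i

/-- π avoids the pattern (2,1,3). -/
def Avoids213 (π : List α) : Prop :=
  ¬ ∃ i j k : Fin π.length, i < j ∧ j < k ∧ π.get j < π.get i ∧ π.get i < π.get k

/-- π contains a strictly decreasing subsequence of length `k`. -/
def HasDecreasingSubseq (π : List α) (k : ℕ) : Prop :=
  ∃ s : List α, s.Sublist π ∧ s.length = k ∧ s.Chain' (· > ·)

/-- Splay the keys of a list in order, starting from `t`. -/
def splaySeq (π : List α) (t : BT α) : BT α := π.foldl (fun s x => BT.splay x s) t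

/-- The cost of splaying a sequence of keys starting from `t`:
each splay costs the current depth of the requested key plus one. -/
def splayCost : BT α → List α → ℕ
  | _, [] => 0
  | t, x :: xs => (t.depthOf x + 1) + splayCost (BT.splay x t) xs

/-- The cost of insertion splaying a sequence of keys starting from `t`:
each key is leaf-inserted, then the new node is splayed, at a cost of
its depth after insertion plus one. -/
def insertSplayCost : BT α → List α → ℕ
  | _, [] => 0
  | t, x :: xs =>
    ((t.insertKey x).depthOf x + 1) + insertSplayCost (BT.splay x (t.insertKey x)) xs

/-- `DF rk xs` = Σ_{i≥2} log₂(|rk(x_i) − rk(x_{i−1})| + 1). -/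
noncomputable def DF (rk : α → ℕ) (xs : List α) : ℝ :=
  ((xs.zip xs.tail).map
    (fun p => Real.logb 2 (|(rk p.2 : ℝ) - (rk p.1 : ℝ)| + 1))).sum

/-- The rank of `x` within the sequence `σ` itself. -/
def rankIn (σ : List α) (x : α) : ℕ := (σ.filter (fun y => y ≤ x)).length

/-- The dynamic-finger sum of a sequence, with ranks computed in the
sequence itself. -/
noncomputable def DFseq (σ : List α) : ℝ := DF (rankIn σ) σ

end Defs

section Proof

variable {α : Type} [LinearOrder α]

lemma dropWhile_cons_head_false {β : Type} (p : β → Bool) :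
    ∀ (l : List β) {r : β} {R' : List β}, l.dropWhile p = r :: R' → p r = false := by
  intro l
  induction l with
  | nil => intro r R' h; simp at h
  | cons a l ih =>
    intro r R' h
    rw [List.dropWhile_cons] at h
    by_cases hp : p a
    · rw [if_pos hp] at h; exact ih h
    · rw [if_neg hp] at h
      obtain ⟨rfl, -⟩ := List.cons.inj h
      exact Bool.eq_false_iff.mpr hp

lemma preorder_perm_keys (t : BT α) : t.preorder.Perm t.keys := by
  induction t with
  | leaf => simp [BT.preorder, BT.keys]
  | node l v r ihl ihr =>
    simp only [BT.preorder, BT.keys]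
    exact (List.Perm.cons v (ihl.append ihr)).trans List.perm_middle.symm

lemma mem_preorder {x : α} {t : BT α} : x ∈ t.preorder ↔ x ∈ t.keys :=
  (preorder_perm_keys t).mem_iff

/-- A bad 231 pattern as a sublist. -/
def Bad (π : List α) : Prop := ∃ a b c : α, [a, b, c].Sublist π ∧ c < a ∧ a < b

lemma avoids231_iff_not_bad (π : List α) : Avoids231 π ↔ ¬ Bad π := by
  unfold Avoids231 Bad
  constructor
  · rintro h ⟨a, b, c, hs, h1, h2⟩
    obtain ⟨is, heq, hp⟩ := List.sublist_eq_map_getElem hs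
    match is, heq with
    | [i, j, k], heq =>
      simp only [List.map, List.cons.injEq, and_true] at heq
      obtain ⟨ha, hb, hc⟩ := heq
      rcases List.pairwise_cons.mp hp with ⟨hij, hp2⟩
      rcases List.pairwise_cons.mp hp2 with ⟨hjk, -⟩
      exact h ⟨i, j, k, hij j (by simp), hjk k (by simp),
        by simp only [ha, hc, Fin.getElem_fin, List.get_eq_getElem] at h1 ⊢; exact h1,
        by simp only [ha, hb, Fin.getElem_fin, List.get_eq_getElem] at h2 ⊢; exact h2⟩
  · rintro h ⟨i, j, k, hij, hjk, h1, h2⟩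
    refine h ⟨π.get i, π.get j, π.get k, ?_, h1, h2⟩
    have heq : [π.get i, π.get j, π.get k] = List.map (π[·]) [i, j, k] := by simp
    rw [heq]
    have hP : List.Pairwise (fun a b : Fin π.length => (a : ℕ) < (b : ℕ)) [i, j, k] := by
      refine List.pairwise_cons.mpr ⟨?_, List.pairwise_cons.mpr ⟨?_, List.pairwise_singleton _ _⟩⟩
      · intro x hx
        rcases List.mem_cons.mp hx with rfl | hx
        · exact hij
        · rcases List.mem_singleton.mp hx with rfl
          exact hij.trans hjk
      · intro x hx
        rcases List.mem_singleton.mp hx with rfl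
        exact hjk
    exact List.map_getElem_sublist hP

lemma not_bad_sublist {s π : List α} (h : s.Sublist π) (hπ : ¬ Bad π) : ¬ Bad s := by
  rintro ⟨a, b, c, hs, h1, h2⟩
  exact hπ ⟨a, b, c, hs.trans h, h1, h2⟩

lemma bst_not_bad (t : BT α) (h : t.IsBST) : ¬ Bad t.preorder := by
  induction t with
  | leaf => rintro ⟨a, b, c, hs, -, -⟩; simp [BT.preorder] at hs
  | node l v r ihl ihr =>
    obtain ⟨hl, hr, hbl, hbr⟩ := h
    have memL : ∀ x ∈ l.preorder, x < v := fun x hx => hl x (mem_preorder.mp hx)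
    have memR : ∀ x ∈ r.preorder, v < x := fun x hx => hr x (mem_preorder.mp hx)
    rintro ⟨a, b, c, hs, h1, h2⟩
    rw [BT.preorder] at hs
    cases hs with
    | cons_cons _ htl =>
      -- here a = v and [b, c] <+ l.preorder ++ r.preorder
      rw [List.sublist_append_iff] at htl
      obtain ⟨s1, s2, he, hs1, hs2⟩ := htl
      rcases s1 with _ | ⟨x, _ | ⟨y, s1⟩⟩
      · -- c ∈ r.preorder, c > v = a contradicts c < a
        simp only [List.nil_append] at he
        subst he
        exact absurd h1 (not_lt.mpr (le_of_lt (memR c (hs2.subset (by simp)))))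
      · simp only [List.cons_append, List.nil_append, List.cons.injEq] at he
        obtain ⟨rfl, rfl⟩ := he
        exact absurd h1 (not_lt.mpr (le_of_lt (memR c (hs2.subset (by simp)))))
      · simp only [List.cons_append, List.cons.injEq] at he
        obtain ⟨rfl, rfl, -⟩ := he
        exact absurd h2 (not_lt.mpr (le_of_lt (memL b (hs1.subset (by simp)))))
    | cons _ htl =>
      rw [List.sublist_append_iff] at htl
      obtain ⟨s1, s2, he, hs1, hs2⟩ := htl
      rcases s1 with _ | ⟨x, _ | ⟨y, _ | ⟨z, s1⟩⟩⟩
      · simp only [List.nil_append] at he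
        subst he
        exact ihr hbr ⟨a, b, c, hs2, h1, h2⟩
      · simp only [List.cons_append, List.nil_append, List.cons.injEq] at he
        obtain ⟨rfl, rfl⟩ := he
        have hav : a < v := memL a (hs1.subset (by simp))
        have hcv : v < c := memR c (hs2.subset (by simp))
        exact absurd h1 (not_lt.mpr (le_of_lt (lt_trans hav hcv)))
      · simp only [List.cons_append, List.nil_append, List.cons.injEq] at he
        obtain ⟨rfl, rfl, rfl⟩ := he
        have hav : a < v := memL a (hs1.subset (by simp))
        have hcv : v < c := memR c (hs2.subset (by simp))
        exact absurd h1 (not_lt.mpr (le_of_lt (lt_trans hav hcv)))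
      · simp only [List.cons_append, List.cons.injEq] at he
        obtain ⟨rfl, rfl, rfl, he4⟩ := he
        have hs1' : [a, b, c].Sublist l.preorder := by
          obtain ⟨rfl, rfl⟩ := List.append_eq_nil_iff.mp he4.symm
          simpa using hs1
        exact ihl hbl ⟨a, b, c, hs1', h1, h2⟩

lemma exists_bst : ∀ (n : ℕ) (π : List α), π.length ≤ n → π.Nodup → ¬ Bad π →
    ∃ T : BT α, T.IsBST ∧ T.preorder = π := by
  intro n
  induction n with
  | zero =>
    intro π h _ _
    rw [List.length_eq_zero_iff.mp (Nat.le_zero.mp h)]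
    exact ⟨BT.leaf, trivial, rfl⟩
  | succ n ih =>
    intro π hlen hnd hav
    match π, hlen, hnd, hav with
    | [], _, _, _ => exact ⟨BT.leaf, trivial, rfl⟩
    | v :: rest, hlen, hnd, hav =>
      set L := rest.takeWhile (fun x => x < v) with hLdef
      set R := rest.dropWhile (fun x => x < v) with hRdef
      have hsplit : L ++ R = rest := List.takeWhile_append_dropWhile
      have hrestlen : rest.length ≤ n := by simpa using hlen
      have hndrest : rest.Nodup := hnd.of_cons
      have hLsub : L.Sublist rest := List.takeWhile_sublist _
      have hRsub : R.Sublist rest := List.dropWhile_sublist _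
      have hrestπ : rest.Sublist (v :: rest) := List.sublist_cons_self v rest
      have hLlt : ∀ x ∈ L, x < v := by
        intro x hx
        have := List.mem_takeWhile_imp hx
        simpa using this
      have hRgt : ∀ x ∈ R, v < x := by
        intro x hx
        rcases hR : R with _ | ⟨r, R'⟩
        · rw [hR] at hx; simp at hx
        · rw [hR] at hx
          have hdw : rest.dropWhile (fun x => decide (x < v)) = r :: R' := by
            rw [← hRdef, hR]
          have hrv : ¬ (r < v) := by
            have := dropWhile_cons_head_false (fun x => decide (x < v)) rest hdw
            simpa using this
          have hRsub' : (r :: R').Sublist rest := hR ▸ hRsub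
          have hrne : r ≠ v := by
            intro h; subst h
            exact (List.nodup_cons.mp hnd).1 (hRsub'.subset (by simp))
          have hvr : v < r := lt_of_le_of_ne (not_lt.mp hrv) (Ne.symm hrne)
          rcases List.mem_cons.mp hx with rfl | hx'
          · exact hvr
          · by_contra hcon
            have hxne : x ≠ v := by
              intro h; subst h
              exact (List.nodup_cons.mp hnd).1 (hRsub'.subset (by simp [hx']))
            have hxv : x < v := lt_of_le_of_ne (not_lt.mp hcon) hxne
            apply hav
            refine ⟨v, r, x, ?_, hxv, hvr⟩
            have h1 : [r, x].Sublist (r :: R') :=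
              List.cons_sublist_cons.mpr (List.singleton_sublist.mpr hx')
            have h2 : (r :: R').Sublist (L ++ (r :: R')) := List.sublist_append_right _ _
            have h3 : [r, x].Sublist rest := by
              have h4 := h1.trans h2
              rwa [show L ++ (r :: R') = rest by rw [← hR]; exact hsplit] at h4
            exact List.cons_sublist_cons.mpr h3
      obtain ⟨TL, hTLbst, hTLpre⟩ := ih L (le_trans hLsub.length_le hrestlen)
        (hLsub.nodup hndrest) (not_bad_sublist (hLsub.trans hrestπ) hav)
      obtain ⟨TR, hTRbst, hTRpre⟩ := ih R (le_trans hRsub.length_le hrestlen)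
        (hRsub.nodup hndrest) (not_bad_sublist (hRsub.trans hrestπ) hav)
      refine ⟨BT.node TL v TR, ⟨?_, ?_, hTLbst, hTRbst⟩, ?_⟩
      · intro x hx
        exact hLlt x (by rw [← hTLpre]; exact mem_preorder.mpr hx)
      · intro x hx
        exact hRgt x (by rw [← hTRpre]; exact mem_preorder.mpr hx)
      · show v :: (TL.preorder ++ TR.preorder) = v :: rest
        rw [hTLpre, hTRpre, hsplit]

end Proof

/-- A sequence of distinct keys is the preorder of some binary search tree
iff it avoids the pattern (2,3,1). -/
theorem preorder_iff_avoids231 {α : Type} [LinearOrder α]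
    (π : List α) (hnd : π.Nodup) :
    (∃ T : BT α, T.IsBST ∧ T.preorder = π) ↔ Avoids231 π := by
  rw [avoids231_iff_not_bad]
  constructor
  · rintro ⟨T, hbst, rfl⟩
    exact bst_not_bad T hbst
  · intro h
    exact exists_bst π.length π le_rfl hnd h
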